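/- Let X be a compact subset of R^n. Then the linear span of the functions x ↦ σ_p(w·x + θ), where σ_p(t) = t^p/p! for p ∈ ℕ, w ∈ R^n and θ ∈ R, is dense in C(X) with respect to the uniform norm. -/
import Mathlib

lemma polar (m : ℕ) (t : Fin m → ℝ) :
    ∑ T : Finset (Fin m), (-1:ℝ)^(m - T.card) * (∑ j ∈ T, t j)^m
      = (m.factorial : ℝ) * ∏ j, t j := by
  classical
  have expand : ∀ T : Finset (Fin m), (∑ j ∈ T, t j) ^ m
      = ∑ p : Fin m → Fin m, if (∀ i, p i ∈ T) then ∏ i, t (p i) else 0 := by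
    intro T
    rw [Finset.sum_pow' T t m, ← Finset.sum_filter]
    apply Finset.sum_congr _ (fun _ _ => rfl)
    ext p
    simp [Fintype.mem_piFinset]
  simp_rw [expand, Finset.mul_sum]
  rw [Finset.sum_comm]
  have key : ∀ p : Fin m → Fin m,
      (∑ T : Finset (Fin m), (-1:ℝ)^(m - T.card) *
        (if (∀ i, p i ∈ T) then ∏ i, t (p i) else 0))
      = (if Function.Bijective p then ∏ j, t j else 0) := by
    intro p
    set R : Finset (Fin m) := Finset.image p Finset.univ with hR
    have hsub : ∀ T : Finset (Fin m), (∀ i, p i ∈ T) ↔ R ⊆ T := by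
      intro T
      constructor
      · intro h j hj
        obtain ⟨i, -, rfl⟩ := Finset.mem_image.mp hj
        exact h i
      · intro h i
        exact h (Finset.mem_image.mpr ⟨i, Finset.mem_univ i, rfl⟩)
    have step1 : (∑ T : Finset (Fin m), (-1:ℝ)^(m - T.card) *
        (if (∀ i, p i ∈ T) then ∏ i, t (p i) else 0))
        = (∏ i, t (p i)) * ∑ T ∈ Finset.univ.filter (fun T => R ⊆ T),
            (-1:ℝ)^(m - T.card) := by
      have hrw : ∀ T : Finset (Fin m), (-1:ℝ)^(m - T.card) *
          (if (∀ i, p i ∈ T) then ∏ i, t (p i) else 0)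
          = if R ⊆ T then (∏ i, t (p i)) * (-1:ℝ)^(m - T.card) else 0 := by
        intro T
        by_cases h : R ⊆ T
        · rw [if_pos h, if_pos ((hsub T).mpr h)]; ring
        · rw [if_neg h, if_neg (fun hh => h ((hsub T).mp hh)), mul_zero]
      simp_rw [hrw]
      rw [← Finset.sum_filter, ← Finset.mul_sum]
    rw [step1]
    have hcardR : R.card ≤ m := by
      simpa using Finset.card_le_univ R
    have step2 : (∑ T ∈ Finset.univ.filter (fun T => R ⊆ T), (-1:ℝ)^(m - T.card))
        = ∑ S ∈ Rᶜ.powerset, (1:ℝ)^S.card * (-1:ℝ)^(Rᶜ.card - S.card) := by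
      apply Finset.sum_bij' (fun T _ => T \ R) (fun S _ => S ∪ R)
      · intro T hT
        rw [Finset.mem_filter] at hT
        rw [Finset.mem_powerset]
        exact fun x hx => Finset.mem_compl.mpr (Finset.mem_sdiff.mp hx).2
      · intro S hS
        rw [Finset.mem_filter]
        exact ⟨Finset.mem_univ _, Finset.subset_union_right⟩
      · intro T hT
        rw [Finset.mem_filter] at hT
        exact Finset.sdiff_union_of_subset hT.2
      · intro S hS
        rw [Finset.mem_powerset] at hS
        rw [Finset.union_sdiff_right]
        exact Finset.sdiff_eq_self_of_disjoint (Finset.disjoint_left.mpr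
          (fun a ha => Finset.mem_compl.mp (hS ha)))
      · intro T hT
        rw [Finset.mem_filter] at hT
        have h1 : (T \ R).card = T.card - R.card := Finset.card_sdiff_of_subset hT.2
        have h2 : R.card ≤ T.card := Finset.card_le_card hT.2
        have h3 : T.card ≤ m := by simpa using Finset.card_le_univ T
        have h4 : Rᶜ.card = m - R.card := by
          rw [Finset.card_compl]
          simp
        rw [one_pow, one_mul]
        congr 1
        rw [h1, h4]
        omega
    rw [step2, Finset.sum_pow_mul_eq_add_pow]
    have h11 : (1:ℝ) + -1 = 0 := by norm_num
    rw [h11]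
    by_cases hp : Function.Bijective p
    · have hRuniv : R = Finset.univ := by
        apply Finset.eq_univ_of_forall
        intro y
        obtain ⟨x, hx⟩ := hp.2 y
        exact Finset.mem_image.mpr ⟨x, Finset.mem_univ x, hx⟩
      rw [if_pos hp, hRuniv]
      rw [Finset.compl_univ, Finset.card_empty, pow_zero, mul_one]
      exact Fintype.prod_bijective p hp _ _ (fun i => rfl)
    · rw [if_neg hp]
      have hns : ¬ Function.Surjective p := fun hs =>
        hp (Finite.surjective_iff_bijective.mp hs)
      have : Rᶜ.card ≠ 0 := by
        rw [Finset.card_ne_zero, Finset.nonempty_iff_ne_empty]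
        intro h
        apply hns
        intro y
        have : R = Finset.univ := by
          rwa [← Finset.compl_eq_empty_iff]
        obtain ⟨x, -, hx⟩ := Finset.mem_image.mp (this ▸ Finset.mem_univ y)
        exact ⟨x, hx⟩
      rw [zero_pow this, mul_zero]
  simp_rw [key]
  rw [← Finset.sum_filter, Finset.sum_const, nsmul_eq_mul]
  have hcard : (Finset.univ.filter
      (fun p : Fin m → Fin m => Function.Bijective p)).card = m.factorial := by
    have huniv : (Finset.univ : Finset (Equiv.Perm (Fin m))).card = m.factorial := by
      simp [Finset.card_univ, Fintype.card_perm, Fintype.card_fin]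
    rw [← huniv]
    apply Finset.card_bij' (fun p hp => Equiv.ofBijective p (Finset.mem_filter.mp hp).2)
      (fun e _ => (e : Fin m → Fin m))
    · intro p hp
      exact Finset.mem_univ _
    · intro p hp
      rfl
    · intro e he
      exact Equiv.ext (fun x => rfl)
    · intro e he
      exact Finset.mem_filter.mpr ⟨Finset.mem_univ _, e.bijective⟩
  rw [hcard]

variable {n : ℕ} {X : Set (Fin n → ℝ)}

/-- The generating set. -/
def Sgen (n : ℕ) (X : Set (Fin n → ℝ)) : Set C(X, ℝ) :=
  {f : C(X, ℝ) | ∃ (p : ℕ) (w : Fin n → ℝ) (θ : ℝ), ∀ x : X,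
    f x = (∑ i, w i * (x : Fin n → ℝ) i + θ) ^ p / p.factorial}

lemma affine_cont (w : Fin n → ℝ) (θ : ℝ) :
    Continuous fun x : X => ∑ i, w i * (x : Fin n → ℝ) i + θ := by
  apply Continuous.add _ continuous_const
  apply continuous_finset_sum
  intro i _
  exact continuous_const.mul ((continuous_apply i).comp continuous_subtype_val)

lemma prodAffine_mem (m : ℕ) (g : Fin m → Fin n → ℝ) (c : Fin m → ℝ) :
    (⟨fun x => ∏ j, (∑ i, g j i * (x : Fin n → ℝ) i + c j),
      continuous_finset_prod _ fun j _ => affine_cont (g j) (c j)⟩ : C(X, ℝ)) ∈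
      Submodule.span ℝ (Sgen n X) := by
  classical
  set h : Finset (Fin m) → C(X, ℝ) := fun T =>
    ⟨fun x => (∑ i, (∑ j ∈ T, g j i) * (x : Fin n → ℝ) i + ∑ j ∈ T, c j) ^ m
        / m.factorial, ((affine_cont _ _).pow m).div_const _⟩ with hh
  have hmem : ∀ T, h T ∈ Sgen n X := by
    intro T
    exact ⟨m, fun i => ∑ j ∈ T, g j i, ∑ j ∈ T, c j, fun x => rfl⟩
  have heq : (⟨fun x => ∏ j, (∑ i, g j i * (x : Fin n → ℝ) i + c j),
      continuous_finset_prod _ fun j _ => affine_cont (g j) (c j)⟩ : C(X, ℝ))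
      = ∑ T : Finset (Fin m), ((-1:ℝ)^(m - T.card)) • h T := by
    ext x
    have hpolar := polar m (fun j => ∑ i, g j i * (x : Fin n → ℝ) i + c j)
    have hfac : (m.factorial : ℝ) ≠ 0 := by positivity
    have hlin : ∀ T : Finset (Fin m),
        (∑ j ∈ T, (∑ i, g j i * (x : Fin n → ℝ) i + c j))
        = ∑ i, (∑ j ∈ T, g j i) * (x : Fin n → ℝ) i + ∑ j ∈ T, c j := by
      intro T
      rw [Finset.sum_add_distrib]
      congr 1
      rw [Finset.sum_comm]
      simp_rw [Finset.sum_mul]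
    simp only [ContinuousMap.coe_mk, ContinuousMap.coe_sum, ContinuousMap.coe_smul,
      Finset.sum_apply, Pi.smul_apply, smul_eq_mul, hh, ContinuousMap.coe_mk]
    have hstep : ∀ T : Finset (Fin m), (-1:ℝ)^(m - T.card) *
        ((∑ i, (∑ j ∈ T, g j i) * (x : Fin n → ℝ) i + ∑ j ∈ T, c j) ^ m / m.factorial)
        = ((-1:ℝ)^(m - T.card) *
            (∑ j ∈ T, (∑ i, g j i * (x : Fin n → ℝ) i + c j)) ^ m) / m.factorial := by
      intro T
      rw [hlin T, mul_div_assoc]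
    simp_rw [hstep]
    rw [← Finset.sum_div, hpolar, mul_comm, mul_div_assoc, div_self hfac, mul_one]
  rw [heq]
  exact Submodule.sum_mem _ (fun T _ =>
    Submodule.smul_mem _ _ (Submodule.subset_span (hmem T)))

lemma mul_mem_span (f₁ f₂ : C(X, ℝ)) (h₁ : f₁ ∈ Sgen n X) (h₂ : f₂ ∈ Sgen n X) :
    f₁ * f₂ ∈ Submodule.span ℝ (Sgen n X) := by
  obtain ⟨p, w, θ, hw⟩ := h₁
  obtain ⟨q, v, η, hv⟩ := h₂
  have key := prodAffine_mem (X := X) (p + q)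
    (Fin.append (fun _ : Fin p => w) (fun _ : Fin q => v))
    (Fin.append (fun _ : Fin p => θ) (fun _ : Fin q => η))
  have heq : f₁ * f₂ = ((p.factorial : ℝ) * q.factorial)⁻¹ •
      (⟨fun x => ∏ j, (∑ i, Fin.append (fun _ : Fin p => w) (fun _ : Fin q => v) j i
          * (x : Fin n → ℝ) i
        + Fin.append (fun _ : Fin p => θ) (fun _ : Fin q => η) j),
        continuous_finset_prod _ fun j _ => affine_cont _ _⟩ : C(X, ℝ)) := by
    ext x
    have hprod : (∏ j : Fin (p + q),
        (∑ i, Fin.append (fun _ : Fin p => w) (fun _ : Fin q => v) j i * (x : Fin n → ℝ) i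
          + Fin.append (fun _ : Fin p => θ) (fun _ : Fin q => η) j))
        = (∑ i, w i * (x : Fin n → ℝ) i + θ) ^ p
          * (∑ i, v i * (x : Fin n → ℝ) i + η) ^ q := by
      rw [Fin.prod_univ_add]
      congr 1
      · trans (∏ _j : Fin p, (∑ i, w i * (x : Fin n → ℝ) i + θ))
        · exact Finset.prod_congr rfl (fun j _ => by simp only [Fin.append_left])
        · exact Fin.prod_const p _
      · trans (∏ _j : Fin q, (∑ i, v i * (x : Fin n → ℝ) i + η))
        · exact Finset.prod_congr rfl (fun j _ => by simp only [Fin.append_right])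
        · exact Fin.prod_const q _
    simp only [ContinuousMap.mul_apply, ContinuousMap.smul_apply, ContinuousMap.coe_mk,
      smul_eq_mul, hprod, hw x, hv x]
    have hp0 : (p.factorial : ℝ) ≠ 0 := by positivity
    have hq0 : (q.factorial : ℝ) ≠ 0 := by positivity
    field_simp
  rw [heq]
  exact Submodule.smul_mem _ _ key

lemma one_mem_Sgen : (1 : C(X, ℝ)) ∈ Sgen n X := by
  refine ⟨0, 0, 0, fun x => ?_⟩
  simp

lemma span_mul_le :
    ∀ f ∈ Submodule.span ℝ (Sgen n X), ∀ g ∈ Submodule.span ℝ (Sgen n X),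
      f * g ∈ Submodule.span ℝ (Sgen n X) := by
  intro f hf g hg
  have h1 : Submodule.span ℝ (Sgen n X) * Submodule.span ℝ (Sgen n X)
      ≤ Submodule.span ℝ (Sgen n X) := by
    rw [Submodule.span_mul_span]
    apply Submodule.span_le.mpr
    rintro _ ⟨a, ha, b, hb, rfl⟩
    exact mul_mem_span a b ha hb
  exact h1 (Submodule.mul_mem_mul hf hg)

lemma adjoin_le_span :
    (Algebra.adjoin ℝ (Sgen n X) : Set C(X, ℝ)) ⊆ (Submodule.span ℝ (Sgen n X) : Set C(X, ℝ)) := by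
  classical
  let M : Submonoid C(X, ℝ) :=
    { carrier := (Submodule.span ℝ (Sgen n X) : Set C(X, ℝ))
      one_mem' := Submodule.subset_span one_mem_Sgen
      mul_mem' := fun ha hb => span_mul_le _ ha _ hb }
  intro f hf
  have hf' : f ∈ Subalgebra.toSubmodule (Algebra.adjoin ℝ (Sgen n X)) := hf
  rw [Algebra.adjoin_eq_span] at hf'
  have : Submodule.span ℝ ((Submonoid.closure (Sgen n X) : Set C(X, ℝ)))
      ≤ Submodule.span ℝ (Sgen n X) := by
    apply Submodule.span_le.mpr
    intro g hg
    exact Submonoid.closure_le (S := M).mpr Submodule.subset_span hg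
  exact this hf'

theorem stmt2 (n : ℕ) (X : Set (Fin n → ℝ)) (hX : IsCompact X) :
    closure ((Submodule.span ℝ
      {f : C(X, ℝ) | ∃ (p : ℕ) (w : Fin n → ℝ) (θ : ℝ), ∀ x : X,
        f x = (∑ i, w i * (x : Fin n → ℝ) i + θ) ^ p / p.factorial} :
      Submodule ℝ C(X, ℝ)) : Set C(X, ℝ)) = Set.univ := by
  haveI : CompactSpace X := isCompact_iff_compactSpace.mp hX
  have hsep : (Algebra.adjoin ℝ (Sgen n X)).SeparatesPoints := by
    intro x y hxy
    have : ∃ i, (x : Fin n → ℝ) i ≠ (y : Fin n → ℝ) i := by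
      by_contra h
      push_neg at h
      exact hxy (Subtype.ext (funext h))
    obtain ⟨i, hi⟩ := this
    classical
    set w₀ : Fin n → ℝ := Pi.single i 1 with hw₀
    refine ⟨fun z => ∑ j, w₀ j * (z : Fin n → ℝ) j + 0, ?_, ?_⟩
    · refine ⟨(⟨fun z => ∑ j, w₀ j * (z : Fin n → ℝ) j + 0,
        affine_cont _ _⟩ : C(X, ℝ)), ?_, rfl⟩
      apply Algebra.subset_adjoin
      refine ⟨1, w₀, 0, fun z => ?_⟩
      simp
    · simp only [hw₀, Pi.single_apply, ite_mul, one_mul, zero_mul,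
        Finset.sum_ite_eq', Finset.mem_univ, if_true, add_zero]
      exact hi
  have htop := ContinuousMap.subalgebra_topologicalClosure_eq_top_of_separatesPoints
    (Algebra.adjoin ℝ (Sgen n X)) hsep
  have hclos : closure ((Algebra.adjoin ℝ (Sgen n X) : Subalgebra ℝ C(X, ℝ)) : Set C(X, ℝ))
      = Set.univ := by
    have := congrArg (fun A : Subalgebra ℝ C(X, ℝ) => (A : Set C(X, ℝ))) htop
    simpa [Subalgebra.topologicalClosure] using this
  apply Set.eq_univ_of_univ_subset
  rw [← hclos]
  exact closure_mono adjoin_le_span
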